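/- For any finite simple graphs G₁, …, G_ℓ, the Shannon capacity satisfies Θ(G₁ ⊠ ⋯ ⊠ G_ℓ) ≤ (Θ(G₁ + ⋯ + G_ℓ)/ℓ)^ℓ. -/

import Mathlib

namespace Paper

def strongProd {V W : Type*} (G : SimpleGraph V) (H : SimpleGraph W) : SimpleGraph (V × W) :=
  SimpleGraph.fromRel (fun x y =>
    (x.1 = y.1 ∨ G.Adj x.1 y.1) ∧ (x.2 = y.2 ∨ H.Adj x.2 y.2))

def strongPow {V : Type*} (G : SimpleGraph V) (k : ℕ) : SimpleGraph (Fin k → V) :=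
  SimpleGraph.fromRel (fun x y => ∀ i, x i = y i ∨ G.Adj (x i) (y i))

noncomputable def indepNum {V : Type*} [Fintype V] (G : SimpleGraph V) : ℕ :=
  sSup {n | ∃ s : Finset V, (∀ a ∈ s, ∀ b ∈ s, a ≠ b → ¬ G.Adj a b) ∧ s.card = n}

noncomputable def shannonCapacity {V : Type*} [Fintype V] (G : SimpleGraph V) : ℝ :=
  ⨆ k : ℕ, (indepNum (strongPow G (k + 1)) : ℝ) ^ ((1 : ℝ) / (k + 1))

noncomputable def lovaszTheta {V : Type*} [Fintype V] (G : SimpleGraph V) : ℝ :=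
  sSup {x : ℝ | ∃ B : Matrix V V ℝ, B.PosSemidef ∧ B.trace = 1 ∧
    (∀ i j, G.Adj i j → B i j = 0) ∧ x = ∑ i, ∑ j, B i j}

noncomputable def fracIndepNum {V : Type*} [Fintype V] (G : SimpleGraph V) : ℝ :=
  sSup {x : ℝ | ∃ f : V → ℝ, (∀ v, 0 ≤ f v) ∧
    (∀ s : Finset V, G.IsClique (s : Set V) → ∑ v ∈ s, f v ≤ 1) ∧ x = ∑ v, f v}

def Universal {V : Type*} [Fintype V] (G : SimpleGraph V) : Prop :=
  ∀ (W : Type) [Fintype W] (H : SimpleGraph W),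
    indepNum (strongProd G H) = indepNum G * indepNum H

def sigmaUnion {ι : Type*} {V : ι → Type*} (G : ∀ i, SimpleGraph (V i)) :
    SimpleGraph (Σ i, V i) :=
  SimpleGraph.fromRel (fun x y =>
    ∃ i, ∃ a b : V i, (G i).Adj a b ∧ x = ⟨i, a⟩ ∧ y = ⟨i, b⟩)

def piStrongProd {ι : Type*} {V : ι → Type*} (G : ∀ i, SimpleGraph (V i)) :
    SimpleGraph (∀ i, V i) :=
  SimpleGraph.fromRel (fun x y => ∀ i, x i = y i ∨ (G i).Adj (x i) (y i))

def tadpole (k l : ℕ) : SimpleGraph (Fin (k + l)) :=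
  SimpleGraph.fromRel (fun x y =>
    ((x : ℕ) < k ∧ (y : ℕ) < k ∧ ((x : ℕ) + 1) % k = (y : ℕ)) ∨
    (k ≤ (x : ℕ) ∧ (y : ℕ) = (x : ℕ) + 1) ∨
    ((x : ℕ) = 0 ∧ (y : ℕ) = k))


section Aux
open Finset Nat Filter Real Topology

-- adjacency lemmas
lemma strongPow_adj {V : Type*} (G : SimpleGraph V) (k : ℕ) (x y : Fin k → V) :
    (strongPow G k).Adj x y ↔ x ≠ y ∧ ∀ i, x i = y i ∨ G.Adj (x i) (y i) := by
  constructor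
  · rintro ⟨hne, h | h⟩
    · exact ⟨hne, h⟩
    · exact ⟨hne, fun i => (h i).imp Eq.symm SimpleGraph.Adj.symm⟩
  · rintro ⟨hne, h⟩
    exact ⟨hne, Or.inl h⟩

lemma piStrongProd_adj {ι : Type*} {V : ι → Type*} (G : ∀ i, SimpleGraph (V i))
    (x y : ∀ i, V i) :
    (piStrongProd G).Adj x y ↔ x ≠ y ∧ ∀ i, x i = y i ∨ (G i).Adj (x i) (y i) := by
  constructor
  · rintro ⟨hne, h | h⟩
    · exact ⟨hne, h⟩
    · exact ⟨hne, fun i => (h i).imp Eq.symm SimpleGraph.Adj.symm⟩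
  · rintro ⟨hne, h⟩
    exact ⟨hne, Or.inl h⟩

lemma sigmaUnion_adj {ι : Type*} {V : ι → Type*} (G : ∀ i, SimpleGraph (V i))
    (x y : Σ i, V i) :
    (sigmaUnion G).Adj x y ↔ ∃ i, ∃ a b : V i, (G i).Adj a b ∧ x = ⟨i, a⟩ ∧ y = ⟨i, b⟩ := by
  constructor
  · rintro ⟨hne, ⟨i, a, b, hab, hx, hy⟩ | ⟨i, a, b, hab, hx, hy⟩⟩
    · exact ⟨i, a, b, hab, hx, hy⟩
    · exact ⟨i, b, a, hab.symm, hy, hx⟩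
  · rintro ⟨i, a, b, hab, rfl, rfl⟩
    refine ⟨?_, Or.inl ⟨i, a, b, hab, rfl, rfl⟩⟩
    simp only [ne_eq, Sigma.mk.inj_iff, heq_eq_eq, true_and]
    rintro ⟨rfl, rfl⟩
    exact hab.ne rfl

lemma sigmaUnion_adj_fst {ι : Type*} {V : ι → Type*} (G : ∀ i, SimpleGraph (V i))
    {x y : Σ i, V i} (h : (sigmaUnion G).Adj x y) : x.1 = y.1 := by
  rw [sigmaUnion_adj] at h
  obtain ⟨i, a, b, -, rfl, rfl⟩ := h
  rfl

lemma sigmaUnion_adj_mk {ι : Type*} {V : ι → Type*} (G : ∀ i, SimpleGraph (V i))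
    {i : ι} {a b : V i} (h : (sigmaUnion G).Adj ⟨i, a⟩ ⟨i, b⟩) : (G i).Adj a b := by
  rw [sigmaUnion_adj] at h
  obtain ⟨j, c, d, hcd, hx, hy⟩ := h
  obtain ⟨rfl, hc⟩ := Sigma.mk.inj_iff.mp hx
  obtain ⟨-, hd⟩ := Sigma.mk.inj_iff.mp hy
  rw [eq_of_heq hc, eq_of_heq hd]
  exact hcd

-- indepNum API
section IndepAPI
variable {V : Type*} [Fintype V] (G : SimpleGraph V)

lemma indep_card_le {s : Finset V} (h : ∀ a ∈ s, ∀ b ∈ s, a ≠ b → ¬ G.Adj a b) :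
    s.card ≤ indepNum G := by
  apply le_csSup
  · refine ⟨Fintype.card V, ?_⟩
    rintro n ⟨t, -, rfl⟩
    exact t.card_le_univ.trans_eq (Finset.card_univ)
  · exact ⟨s, h, rfl⟩

lemma exists_indep_card :
    ∃ s : Finset V, (∀ a ∈ s, ∀ b ∈ s, a ≠ b → ¬ G.Adj a b) ∧ s.card = indepNum G := by
  have hne : {n | ∃ s : Finset V, (∀ a ∈ s, ∀ b ∈ s, a ≠ b → ¬ G.Adj a b) ∧ s.card = n}.Nonempty :=
    ⟨0, ∅, by simp, rfl⟩
  have hbdd : BddAbove {n | ∃ s : Finset V, (∀ a ∈ s, ∀ b ∈ s, a ≠ b → ¬ G.Adj a b) ∧ s.card = n} := by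
    refine ⟨Fintype.card V, ?_⟩
    rintro n ⟨t, -, rfl⟩
    exact t.card_le_univ.trans_eq (Finset.card_univ)
  have := Nat.sSup_mem hne hbdd
  exact this

lemma indepNum_le_card : indepNum G ≤ Fintype.card V := by
  apply csSup_le
  · exact ⟨0, ∅, by simp, rfl⟩
  · rintro n ⟨t, -, rfl⟩
    exact t.card_le_univ.trans_eq (Finset.card_univ)

end IndepAPI


lemma indepNum_pow_le {W : Type*} [Fintype W] (Q : SimpleGraph W) (k n : ℕ) :
    indepNum (strongPow Q k) ^ n ≤ indepNum (strongPow Q (k * n)) := by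
  classical
  obtain ⟨S, hS, hScard⟩ := exists_indep_card (strongPow Q k)
  let E : Fin (k * n) ≃ Fin n × Fin k := (finCongr (mul_comm k n)).trans finProdFinEquiv.symm
  let g : (Fin n → (Fin k → W)) → (Fin (k * n) → W) := fun f t => f (E t).1 (E t).2
  have hginj : Function.Injective g := by
    intro f f' hff
    funext s j
    have := congrFun hff (E.symm (s, j))
    simpa [g] using this
  let T : Finset (Fin (k * n) → W) := (Fintype.piFinset (fun _ : Fin n => S)).image g
  have hTcard : T.card = indepNum (strongPow Q k) ^ n := by
    rw [Finset.card_image_of_injective _ hginj, Fintype.card_piFinset]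
    simp [hScard]
  have hTindep : ∀ a ∈ T, ∀ b ∈ T, a ≠ b → ¬ (strongPow Q (k * n)).Adj a b := by
    simp only [T, Finset.mem_image]
    rintro a ⟨f, hf, rfl⟩ b ⟨f', hf', rfl⟩ hne hadj
    rw [strongPow_adj] at hadj
    obtain ⟨-, hadj⟩ := hadj
    have hff : f ≠ f' := fun h => hne (by rw [h])
    obtain ⟨s, hs⟩ : ∃ s, f s ≠ f' s := by
      by_contra h
      push_neg at h
      exact hff (funext h)
    rw [Fintype.mem_piFinset] at hf hf'
    have := hS _ (hf s) _ (hf' s) hs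
    rw [strongPow_adj] at this
    push_neg at this
    obtain ⟨j, hj1, hj2⟩ := this hs
    have := hadj (E.symm (s, j))
    simp only [g, Equiv.apply_symm_apply] at this
    exact this.elim hj1 hj2
  calc indepNum (strongPow Q k) ^ n = T.card := hTcard.symm
    _ ≤ _ := indep_card_le _ hTindep

lemma fact_chain (a b d : ℕ) (hba : b ≤ a) : a ! * (b + d)! ≤ (a + d)! * b ! := by
  induction d with
  | zero => simp
  | succ d ih =>
    have h1 : a ! * (b + (d+1))! = (a ! * (b + d)!) * (b + d + 1) := by
      rw [show b + (d+1) = (b + d) + 1 from rfl, Nat.factorial_succ]; ring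
    have h2 : (a + (d+1))! * b ! = ((a + d)! * b !) * (a + d + 1) := by
      rw [show a + (d+1) = (a + d) + 1 from rfl, Nat.factorial_succ]; ring
    rw [h1, h2]
    exact Nat.mul_le_mul ih (by omega)

/-- exchange: if `b ≤ N ≤ a` then `N! * (a + b - N)! ≤ a! * b!`. -/
lemma fact_exchange {a b N : ℕ} (hb : b ≤ N) (ha : N ≤ a) :
    N ! * (a + b - N)! ≤ a ! * b ! := by
  have h := fact_chain N b (a - N) hb
  have h1 : b + (a - N) = a + b - N := by omega
  have h2 : N + (a - N) = a := by omega
  rwa [h1, h2] at h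

lemma fact_pow_le_prod_aux {ι : Type*} [DecidableEq ι] (n : ℕ) :
    ∀ (s : Finset ι) (f : ι → ℕ) (N : ℕ), s.card = n → ∑ i ∈ s, f i = s.card * N →
      (N !) ^ s.card ≤ ∏ i ∈ s, (f i)! := by
  classical
  induction n with
  | zero =>
    intro s f N hn h
    rw [Finset.card_eq_zero] at hn
    subst hn; simp
  | succ n ih =>
    intro s f N hn h
    rw [hn] at h ⊢
    have hsne : s.Nonempty := by
      rw [← Finset.card_pos, hn]; omega
    obtain ⟨i, hi, hmax⟩ := Finset.exists_max_image s f hsne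
    have hiN : N ≤ f i := by
      by_contra hlt
      push_neg at hlt
      have h2 : ∑ j ∈ s, f j ≤ s.card * (f i) := by
        calc ∑ j ∈ s, f j ≤ ∑ _j ∈ s, f i := Finset.sum_le_sum (fun j hj => hmax j hj)
          _ = s.card * f i := by rw [Finset.sum_const, smul_eq_mul]
      rw [hn] at h2
      rw [h] at h2
      nlinarith
    have hsum_erase : ∑ x ∈ s.erase i, f x + f i = (n + 1) * N := by
      rw [Finset.sum_erase_add s f hi, h]
    rcases Nat.eq_zero_or_pos n with hn0 | hnpos
    · subst hn0
      obtain ⟨a, rfl⟩ := Finset.card_eq_one.mp hn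
      simp only [Finset.sum_singleton, one_mul] at h
      simp [h]
    · have hcard' : (s.erase i).card = n := by
        rw [Finset.card_erase_of_mem hi, hn]
        omega
      have herase : (s.erase i).Nonempty := by
        rw [← Finset.card_pos, hcard']; omega
      obtain ⟨j, hj, hmin⟩ := Finset.exists_min_image (s.erase i) f herase
      have hji : j ≠ i := Finset.ne_of_mem_erase hj
      have hjN : f j ≤ N := by
        by_contra hlt
        push_neg at hlt
        have h2 : (s.erase i).card * f j ≤ ∑ x ∈ s.erase i, f x := by
          calc (s.erase i).card * f j = ∑ _x ∈ s.erase i, f j := by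
                rw [Finset.sum_const, smul_eq_mul]
            _ ≤ ∑ x ∈ s.erase i, f x := Finset.sum_le_sum (fun x hx => hmin x hx)
        rw [hcard'] at h2
        nlinarith
      set f' : ι → ℕ := Function.update f j (f i + f j - N) with hf'
      have hf'j : f' j = f i + f j - N := Function.update_self j _ f
      have hf'ne : ∀ x, x ≠ j → f' x = f x := fun x hx => Function.update_of_ne hx _ f
      have hsum' : ∑ x ∈ s.erase i, f' x = (s.erase i).card * N := by
        have e1 : ∑ x ∈ (s.erase i).erase j, f' x + f' j = ∑ x ∈ s.erase i, f' x :=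
          Finset.sum_erase_add _ _ hj
        have e2 : ∑ x ∈ (s.erase i).erase j, f x + f j = ∑ x ∈ s.erase i, f x :=
          Finset.sum_erase_add _ _ hj
        have heq : ∑ x ∈ (s.erase i).erase j, f' x = ∑ x ∈ (s.erase i).erase j, f x :=
          Finset.sum_congr rfl (fun x hx => hf'ne x (Finset.ne_of_mem_erase hx))
        have hexp : (n + 1) * N = n * N + N := by ring
        rw [← e1, heq, hf'j, hcard']
        rw [← e2] at hsum_erase
        omega
      have hIH := ih (s.erase i) f' N hcard' (by rw [hcard'] at hsum' ⊢; exact hsum')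
      have hkey : N ! * (f' j)! ≤ (f i)! * (f j)! := by
        rw [hf'j]
        exact fact_exchange hjN hiN
      have hprod : ∏ x ∈ s, (f x)! = (f i)! * ((f j)! * ∏ x ∈ (s.erase i).erase j, (f x)!) := by
        rw [← Finset.mul_prod_erase s _ hi, ← Finset.mul_prod_erase (s.erase i) _ hj]
      have hprod' : ∏ x ∈ s.erase i, (f' x)! = (f' j)! * ∏ x ∈ (s.erase i).erase j, (f x)! := by
        rw [← Finset.mul_prod_erase (s.erase i) _ hj]
        congr 1
        exact Finset.prod_congr rfl (fun x hx => by rw [hf'ne x (Finset.ne_of_mem_erase hx)])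
      calc (N !)^(n + 1) = N ! * (N !)^n := by rw [pow_succ]; ring
        _ ≤ N ! * ∏ x ∈ s.erase i, (f' x)! :=
            Nat.mul_le_mul_left _ (by rw [hcard'] at hIH; exact hIH)
        _ = N ! * (f' j)! * ∏ x ∈ (s.erase i).erase j, (f x)! := by rw [hprod']; ring
        _ ≤ ((f i)! * (f j)!) * ∏ x ∈ (s.erase i).erase j, (f x)! :=
            Nat.mul_le_mul_right _ hkey
        _ = ∏ x ∈ s, (f x)! := by rw [hprod]; ring

lemma fact_pow_le_prod {ι : Type*} [DecidableEq ι] (s : Finset ι) (f : ι → ℕ) (N : ℕ)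
    (h : ∑ i ∈ s, f i = s.card * N) : (N !) ^ s.card ≤ ∏ i ∈ s, (f i)! :=
  fact_pow_le_prod_aux s.card s f N rfl h

lemma multinomial_le_central {ℓ N : ℕ} (k : Fin ℓ → ℕ) (h : ∑ i, k i = ℓ * N) :
    Nat.multinomial Finset.univ k ≤ Nat.multinomial Finset.univ (fun _ : Fin ℓ => N) := by
  have hsum2 : ∑ _i : Fin ℓ, N = ℓ * N := by simp [Finset.sum_const, mul_comm]
  have hspec1 := Nat.multinomial_spec Finset.univ k
  have hspec2 := Nat.multinomial_spec Finset.univ (fun _ : Fin ℓ => N)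
  rw [h] at hspec1
  rw [hsum2] at hspec2
  have hprodle : ∏ i : Fin ℓ, (N !) ≤ ∏ i : Fin ℓ, (k i)! := by
    have := fact_pow_le_prod Finset.univ k N (by simpa using h)
    simpa [Finset.prod_const, Finset.card_univ] using this
  have hpos : 0 < ∏ i : Fin ℓ, (N !) := Finset.prod_pos (fun _ _ => Nat.factorial_pos N)
  -- M_k * ∏ k! = M_N * ∏ N!  and ∏ N! ≤ ∏ k!
  by_contra hlt
  push_neg at hlt
  have h1 : Nat.multinomial Finset.univ (fun _ : Fin ℓ => N) + 1 ≤ Nat.multinomial Finset.univ k := hlt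
  have : (∏ i : Fin ℓ, (N !)) * Nat.multinomial Finset.univ (fun _ : Fin ℓ => N)
      < (∏ i : Fin ℓ, (k i)!) * Nat.multinomial Finset.univ k := by
    calc (∏ i : Fin ℓ, (N !)) * Nat.multinomial Finset.univ (fun _ : Fin ℓ => N)
        < (∏ i : Fin ℓ, (N !)) * Nat.multinomial Finset.univ k :=
          mul_lt_mul_of_pos_left hlt hpos
      _ ≤ (∏ i : Fin ℓ, (k i)!) * Nat.multinomial Finset.univ k :=
          Nat.mul_le_mul_right _ hprodle
  rw [hspec1, hspec2] at this
  exact lt_irrefl _ this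

lemma pow_le_multinomial_mul (ℓ N : ℕ) :
    ℓ ^ (ℓ * N) ≤ (ℓ * N + 1) ^ ℓ * Nat.multinomial Finset.univ (fun _ : Fin ℓ => N) := by
  classical
  have hthm := Finset.sum_pow_eq_sum_piAntidiag (Finset.univ : Finset (Fin ℓ))
    (fun _ => (1 : ℕ)) (ℓ * N)
  simp only [Finset.sum_const, Finset.card_univ, Fintype.card_fin, smul_eq_mul, mul_one,
    one_pow, Finset.prod_const_one] at hthm
  have hbound : ∀ k ∈ Finset.piAntidiag (Finset.univ : Finset (Fin ℓ)) (ℓ * N),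
      Nat.multinomial Finset.univ k ≤ Nat.multinomial Finset.univ (fun _ : Fin ℓ => N) := by
    intro k hk
    rw [Finset.mem_piAntidiag] at hk
    exact multinomial_le_central k hk.1
  have hcard : (Finset.piAntidiag (Finset.univ : Finset (Fin ℓ)) (ℓ * N)).card
      ≤ (ℓ * N + 1) ^ ℓ := by
    have : Finset.piAntidiag (Finset.univ : Finset (Fin ℓ)) (ℓ * N)
        ⊆ Fintype.piFinset (fun _ : Fin ℓ => Finset.range (ℓ * N + 1)) := by
      intro k hk
      rw [Finset.mem_piAntidiag] at hk
      rw [Fintype.mem_piFinset]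
      intro i
      rw [Finset.mem_range]
      have hle : k i ≤ ℓ * N :=
        (Finset.single_le_sum (fun _ _ => Nat.zero_le _) (Finset.mem_univ i)).trans_eq hk.1
      omega
    calc _ ≤ (Fintype.piFinset (fun _ : Fin ℓ => Finset.range (ℓ * N + 1))).card :=
          Finset.card_le_card this
      _ = (ℓ * N + 1) ^ ℓ := by simp [Fintype.card_piFinset]
  calc ℓ ^ (ℓ * N) = ∑ k ∈ Finset.piAntidiag (Finset.univ : Finset (Fin ℓ)) (ℓ * N),
        Nat.multinomial Finset.univ k := hthm
    _ ≤ ∑ _k ∈ Finset.piAntidiag (Finset.univ : Finset (Fin ℓ)) (ℓ * N),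
        Nat.multinomial Finset.univ (fun _ : Fin ℓ => N) := Finset.sum_le_sum hbound
    _ = (Finset.piAntidiag (Finset.univ : Finset (Fin ℓ)) (ℓ * N)).card *
        Nat.multinomial Finset.univ (fun _ : Fin ℓ => N) := by
        rw [Finset.sum_const, smul_eq_mul]
    _ ≤ _ := Nat.mul_le_mul_right _ hcard


section Cap
variable {W : Type*} [Fintype W] (Q : SimpleGraph W)

lemma capacity_nonneg : 0 ≤ shannonCapacity Q :=
  Real.iSup_nonneg (fun k => Real.rpow_nonneg (Nat.cast_nonneg _) _)

lemma capacity_bddAbove : BddAbove (Set.range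
    (fun k : ℕ => (indepNum (strongPow Q (k + 1)) : ℝ) ^ ((1 : ℝ) / (k + 1)))) := by
  refine ⟨(Fintype.card W : ℝ), ?_⟩
  rintro x ⟨k, rfl⟩
  have h1 : (indepNum (strongPow Q (k + 1)) : ℝ) ≤ (Fintype.card W : ℝ) ^ (k + 1) := by
    have := indepNum_le_card (strongPow Q (k + 1))
    rw [Fintype.card_pi] at this
    calc (indepNum (strongPow Q (k + 1)) : ℝ)
        ≤ ((∏ _i : Fin (k+1), Fintype.card W : ℕ) : ℝ) := by exact_mod_cast this
      _ = (Fintype.card W : ℝ) ^ (k + 1) := by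
          rw [Finset.prod_const, Finset.card_univ, Fintype.card_fin]
          push_cast; ring
  have hexp : (0:ℝ) ≤ 1 / ((k:ℝ) + 1) := by positivity
  calc (indepNum (strongPow Q (k + 1)) : ℝ) ^ ((1 : ℝ) / (k + 1))
      ≤ ((Fintype.card W : ℝ) ^ (k + 1)) ^ ((1 : ℝ) / (k + 1)) :=
        Real.rpow_le_rpow (Nat.cast_nonneg _) h1 hexp
    _ = (Fintype.card W : ℝ) := by
        rw [← Real.rpow_natCast (Fintype.card W : ℝ) (k + 1), ← Real.rpow_mul (Nat.cast_nonneg _)]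
        rw [show ((k + 1 : ℕ) : ℝ) * (1 / ((k:ℝ) + 1)) = 1 by push_cast; field_simp]
        exact Real.rpow_one _

lemma term_le_capacity (k : ℕ) :
    (indepNum (strongPow Q (k + 1)) : ℝ) ^ ((1 : ℝ) / (k + 1)) ≤ shannonCapacity Q :=
  le_ciSup (capacity_bddAbove Q) k

lemma alpha_le_capacity_pow (N : ℕ) (hN : 0 < N) :
    (indepNum (strongPow Q N) : ℝ) ≤ shannonCapacity Q ^ N := by
  obtain ⟨k, rfl⟩ := Nat.exists_eq_add_of_lt hN
  rw [zero_add] at *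
  have h := term_le_capacity Q k
  have h0 : (0:ℝ) ≤ (indepNum (strongPow Q (k + 1)) : ℝ) := Nat.cast_nonneg _
  calc (indepNum (strongPow Q (k+1)) : ℝ)
      = ((indepNum (strongPow Q (k+1)) : ℝ) ^ ((1:ℝ)/(k+1))) ^ (k+1) := by
        rw [← Real.rpow_natCast ((indepNum (strongPow Q (k+1)) : ℝ) ^ ((1:ℝ)/(k+1))) (k+1),
          ← Real.rpow_mul h0]
        rw [show (1:ℝ)/((k:ℝ)+1) * ((k + 1 : ℕ) : ℝ) = 1 by push_cast; field_simp]
        exact (Real.rpow_one _).symm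
    _ ≤ shannonCapacity Q ^ (k+1) :=
        pow_le_pow_left₀ (Real.rpow_nonneg h0 _) h (k+1)
end Cap


end Aux

section Aux2
open Finset Nat Filter Real Topology

lemma key_lemma (ℓ m : ℕ) (V : Fin ℓ → Type*) [∀ i, Fintype (V i)]
    (G : ∀ i, SimpleGraph (V i)) :
    Nat.multinomial Finset.univ (fun _ : Fin ℓ => m) *
      indepNum (strongPow (piStrongProd G) m)
    ≤ indepNum (strongPow (sigmaUnion G) (ℓ * m)) := by
  classical
  obtain ⟨S, hS, hScard⟩ := exists_indep_card (strongPow (piStrongProd G) m)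
  set E : Fin (ℓ * m) ≃ Fin ℓ × Fin m := finProdFinEquiv.symm with hE
  set bI : Fin (ℓ * m) → Fin ℓ := fun t => (E t).1 with hbI
  set Pat : Finset (Fin (ℓ * m) → Fin ℓ) :=
    Finset.image (fun σ : Equiv.Perm (Fin (ℓ * m)) => bI ∘ σ) Finset.univ with hPat
  -- fiber cardinality of blocks
  have hblock : ∀ i : Fin ℓ, Fintype.card {u : Fin (ℓ * m) // bI u = i} = m := by
    intro i
    have e2 : {u : Fin (ℓ * m) // bI u = i} ≃ {x : Fin ℓ × Fin m // x.1 = i} :=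
      (Equiv.subtypeEquiv E (fun u => Iff.rfl))
    have e3 : {x : Fin ℓ × Fin m // x.1 = i} ≃ Fin m :=
      { toFun := fun x => x.val.2
        invFun := fun b => ⟨(i, b), rfl⟩
        left_inv := fun x => Subtype.ext (Prod.ext x.prop.symm rfl)
        right_inv := fun b => rfl }
    rw [Fintype.card_congr (e2.trans e3), Fintype.card_fin]
  have hfibcard : ∀ p ∈ Pat, ∀ i : Fin ℓ, Fintype.card {t : Fin (ℓ * m) // p t = i} = m := by
    intro p hp i
    obtain ⟨σ, -, rfl⟩ := Finset.mem_image.mp hp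
    have e1 : {t : Fin (ℓ * m) // (bI ∘ σ) t = i} ≃ {u : Fin (ℓ * m) // bI u = i} :=
      Equiv.subtypeEquiv σ (fun t => Iff.rfl)
    rw [Fintype.card_congr e1, hblock]
  -- counting : multinomial ≤ Pat.card
  have hcount : Nat.multinomial Finset.univ (fun _ : Fin ℓ => m) ≤ Pat.card := by
    have hfib : ∀ p ∈ Pat,
        (Finset.univ.filter (fun σ : Equiv.Perm (Fin (ℓ * m)) => bI ∘ σ = p)).card
          ≤ (m !) ^ ℓ := by
      intro p hp
      set Fib := Finset.univ.filter (fun σ : Equiv.Perm (Fin (ℓ * m)) => bI ∘ σ = p) with hFib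
      have hinj : ∃ Φ : {σ // σ ∈ Fib} → (∀ i : Fin ℓ, {t : Fin (ℓ * m) // p t = i} ↪ Fin m),
          Function.Injective Φ := by
        refine ⟨fun σ i => ⟨fun t => (E (σ.val t.val)).2, ?_⟩, ?_⟩
        · rintro ⟨t1, ht1⟩ ⟨t2, ht2⟩ h12
          have hσp : bI ∘ σ.val = p := (Finset.mem_filter.mp σ.prop).2
          have hfst1 : (E (σ.val t1)).1 = i := by
            have := congrFun hσp t1; rw [← this] at ht1; exact ht1
          have hfst2 : (E (σ.val t2)).1 = i := by
            have := congrFun hσp t2; rw [← this] at ht2; exact ht2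
          have : E (σ.val t1) = E (σ.val t2) := by
            apply Prod.ext
            · rw [hfst1, hfst2]
            · exact h12
          have := E.injective this
          have := σ.val.injective this
          exact Subtype.ext this
        · intro σ τ hστ
          apply Subtype.ext
          apply Equiv.ext
          intro t
          have hσp : bI ∘ σ.val = p := (Finset.mem_filter.mp σ.prop).2
          have hτp : bI ∘ τ.val = p := (Finset.mem_filter.mp τ.prop).2
          have hsnd : (E (σ.val t)).2 = (E (τ.val t)).2 := by
            have := congrFun (congrFun (congrArg (fun Φ => fun i (x : {t : Fin (ℓ*m) // p t = i}) => (Φ i).toFun x) hστ) (p t)) ⟨t, rfl⟩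
            exact this
          have hfst : (E (σ.val t)).1 = (E (τ.val t)).1 := by
            rw [show (E (σ.val t)).1 = p t from congrFun hσp t,
              show (E (τ.val t)).1 = p t from congrFun hτp t]
          have : E (σ.val t) = E (τ.val t) := Prod.ext hfst hsnd
          exact E.injective this
      obtain ⟨Φ, hΦ⟩ := hinj
      calc Fib.card = Fintype.card {σ // σ ∈ Fib} := (Fintype.card_coe _).symm
        _ ≤ Fintype.card (∀ i : Fin ℓ, {t : Fin (ℓ * m) // p t = i} ↪ Fin m) :=
            Fintype.card_le_of_injective Φ hΦ
        _ = ∏ i : Fin ℓ, Fintype.card ({t : Fin (ℓ * m) // p t = i} ↪ Fin m) :=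
            Fintype.card_pi
        _ = ∏ i : Fin ℓ, (m !) :=
            Finset.prod_congr rfl (fun i _ => by
              rw [Fintype.card_embedding_eq, Fintype.card_fin, hfibcard p hp i,
                Nat.descFactorial_self])
        _ = (m !) ^ ℓ := by rw [Finset.prod_const, Finset.card_univ, Fintype.card_fin]
    have htotal : (ℓ * m)! = ∑ p ∈ Pat,
        (Finset.univ.filter (fun σ : Equiv.Perm (Fin (ℓ * m)) => bI ∘ σ = p)).card := by
      have hcardperm : (Finset.univ : Finset (Equiv.Perm (Fin (ℓ * m)))).card = (ℓ * m)! := by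
        rw [Finset.card_univ, Fintype.card_perm, Fintype.card_fin]
      rw [← hcardperm]
      exact Finset.card_eq_sum_card_fiberwise
        (fun σ _ => Finset.mem_image.mpr ⟨σ, Finset.mem_univ σ, rfl⟩)
    have hle : (ℓ * m)! ≤ Pat.card * (m !) ^ ℓ := by
      rw [htotal]
      calc ∑ p ∈ Pat, (Finset.univ.filter
            (fun σ : Equiv.Perm (Fin (ℓ * m)) => bI ∘ σ = p)).card
          ≤ ∑ _p ∈ Pat, (m !) ^ ℓ := Finset.sum_le_sum hfib
        _ = Pat.card * (m !) ^ ℓ := by rw [Finset.sum_const, smul_eq_mul]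
    have hspec : Nat.multinomial Finset.univ (fun _ : Fin ℓ => m) * (m !) ^ ℓ = (ℓ * m)! := by
      have := Nat.multinomial_spec Finset.univ (fun _ : Fin ℓ => m)
      rw [Finset.prod_const, Finset.sum_const, Finset.card_univ, Fintype.card_fin,
        smul_eq_mul] at this
      rw [mul_comm] at this
      rw [this]
    have hpos : 0 < (m !) ^ ℓ := pow_pos (Nat.factorial_pos m) _
    have := hspec ▸ hle
    exact Nat.le_of_mul_le_mul_right this hpos
  -- choose representatives
  have hsec : ∀ p ∈ Pat, ∃ σ : Equiv.Perm (Fin (ℓ * m)), bI ∘ σ = p := by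
    intro p hp
    obtain ⟨σ, -, h⟩ := Finset.mem_image.mp hp
    exact ⟨σ, h⟩
  choose! σof hσof using hsec
  -- key bijectivity: for p ∈ Pat, the map t ↦ (p t, rank t) is bijective
  have hbij : ∀ p ∈ Pat, Function.Bijective
      (fun t : Fin (ℓ * m) => ((p t : Fin ℓ), ((E ((σof p) t)).2 : Fin m))) := by
    intro p hp
    have hcomp : (fun t : Fin (ℓ * m) => ((p t : Fin ℓ), ((E ((σof p) t)).2 : Fin m)))
        = E ∘ (σof p) := by
      funext t
      have := congrFun (hσof p hp) t
      apply Prod.ext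
      · exact (this).symm
      · rfl
    rw [hcomp]
    exact E.bijective.comp (σof p).bijective
  -- the big independent set
  set F : ((Fin (ℓ * m) → Fin ℓ) × (Fin m → ∀ i, V i)) → (Fin (ℓ * m) → Σ i, V i) :=
    fun q t => ⟨q.1 t, q.2 ((E ((σof q.1) t)).2) (q.1 t)⟩ with hF
  have hFinj : Set.InjOn F ↑(Pat ×ˢ S) := by
    rintro ⟨p, x⟩ hpx ⟨q, y⟩ hqy heq
    rw [Finset.coe_product] at hpx hqy
    obtain ⟨hp, hx⟩ := hpx
    obtain ⟨hq, hy⟩ := hqy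
    have hpq : p = q := by
      funext t
      have := congrFun heq t
      exact congrArg Sigma.fst this
    subst hpq
    have hxy : x = y := by
      funext s i
      obtain ⟨t, ht⟩ := (hbij p hp).2 (i, s)
      have hpt : p t = i := congrArg Prod.fst ht
      have hst : (E ((σof p) t)).2 = s := congrArg Prod.snd ht
      have h1 := congrFun heq t
      rw [hF] at h1
      simp only at h1
      rw [hpt, hst] at h1
      obtain ⟨-, h2⟩ := Sigma.mk.inj_iff.mp h1
      exact eq_of_heq h2
    rw [hxy]
  set Big : Finset (Fin (ℓ * m) → Σ i, V i) := (Pat ×ˢ S).image F with hBig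
  have hBigcard : Big.card = Pat.card * S.card := by
    rw [hBig, Finset.card_image_of_injOn hFinj, Finset.card_product]
  have hBigindep : ∀ a ∈ Big, ∀ b ∈ Big, a ≠ b → ¬ (strongPow (sigmaUnion G) (ℓ * m)).Adj a b := by
    simp only [hBig, Finset.mem_image]
    rintro a ⟨⟨p, x⟩, hpx, rfl⟩ b ⟨⟨q, y⟩, hqy, rfl⟩ hne hadj
    rw [Finset.mem_product] at hpx hqy
    obtain ⟨hp, hx⟩ := hpx
    obtain ⟨hq, hy⟩ := hqy
    rw [strongPow_adj] at hadj
    obtain ⟨-, hadj⟩ := hadj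
    by_cases hpq : p = q
    · subst hpq
      have hxy : x ≠ y := by
        rintro rfl
        exact hne rfl
      -- derive adjacency of x and y in strongPow (piStrongProd G) m
      have hadj2 : (strongPow (piStrongProd G) m).Adj x y := by
        rw [strongPow_adj]
        refine ⟨hxy, ?_⟩
        intro s
        by_cases hall : ∀ i, x s i = y s i
        · exact Or.inl (funext hall)
        · refine Or.inr ?_
          rw [piStrongProd_adj]
          refine ⟨fun hc => hall (fun i => congrFun hc i), ?_⟩
          intro i
          obtain ⟨t, ht⟩ := (hbij p hp).2 (i, s)
          have hpt : p t = i := congrArg Prod.fst ht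
          have hst : (E ((σof p) t)).2 = s := congrArg Prod.snd ht
          have h1 := hadj t
          rw [hF] at h1
          simp only at h1
          rw [hpt, hst] at h1
          rcases h1 with h1 | h1
          · obtain ⟨-, h2⟩ := Sigma.mk.inj_iff.mp h1
            exact Or.inl (eq_of_heq h2)
          · exact Or.inr (sigmaUnion_adj_mk G h1)
      exact hS x hx y hy hxy hadj2
    · obtain ⟨t, ht⟩ : ∃ t, p t ≠ q t := by
        by_contra hc
        push_neg at hc
        exact hpq (funext hc)
      have h1 := hadj t
      rcases h1 with h1 | h1
      · exact ht (congrArg Sigma.fst h1)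
      · exact ht (sigmaUnion_adj_fst G h1)
  calc Nat.multinomial Finset.univ (fun _ : Fin ℓ => m) * indepNum (strongPow (piStrongProd G) m)
      ≤ Pat.card * S.card := by
        rw [hScard]
        exact Nat.mul_le_mul_right _ hcount
    _ = Big.card := hBigcard.symm
    _ ≤ indepNum (strongPow (sigmaUnion G) (ℓ * m)) := indep_card_le _ hBigindep

end Aux2

open Finset Nat Filter Real Topology in
theorem capacity_strong_product_le (ℓ : ℕ) (hℓ : 1 ≤ ℓ) (V : Fin ℓ → Type*)
    [∀ i, Fintype (V i)] (G : ∀ i, SimpleGraph (V i)) :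
    shannonCapacity (piStrongProd G) ≤ (shannonCapacity (sigmaUnion G) / ℓ) ^ ℓ := by
  classical
  set Θ : ℝ := shannonCapacity (sigmaUnion G) with hΘ
  have hΘ0 : 0 ≤ Θ := capacity_nonneg _
  have hℓR : (0:ℝ) < ℓ := by exact_mod_cast hℓ
  apply ciSup_le
  intro k
  set m : ℕ := k + 1 with hm
  have hm1 : 1 ≤ m := Nat.le_add_left 1 k
  set a : ℝ := (indepNum (strongPow (piStrongProd G) m) : ℝ) with ha
  have ha0 : 0 ≤ a := Nat.cast_nonneg _
  set c : ℝ := ((Θ / ℓ) ^ ℓ) ^ m with hc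
  have hdiv0 : 0 ≤ Θ / ℓ := div_nonneg hΘ0 hℓR.le
  have hc0 : 0 ≤ c := pow_nonneg (pow_nonneg hdiv0 _) _
  -- main bound for each n ≥ 1
  have hbound : ∀ n : ℕ, 1 ≤ n →
      a ≤ (((ℓ * (m * n) + 1 : ℕ) : ℝ) ^ ℓ) ^ ((1:ℝ)/n) * c := by
    intro n hn
    have hNpos : 0 < ℓ * (m * n) := by positivity
    -- natural number chain
    have h1 : (a ^ n : ℝ) ≤ (indepNum (strongPow (piStrongProd G) (m * n)) : ℝ) := by
      rw [ha, ← Nat.cast_pow]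
      exact_mod_cast indepNum_pow_le (piStrongProd G) m n
    have h2 : ((Nat.multinomial Finset.univ (fun _ : Fin ℓ => m * n) : ℕ) : ℝ) *
        (indepNum (strongPow (piStrongProd G) (m * n)) : ℝ)
        ≤ (indepNum (strongPow (sigmaUnion G) (ℓ * (m * n))) : ℝ) := by
      rw [← Nat.cast_mul]
      exact_mod_cast key_lemma ℓ (m * n) V G
    have h3 : (indepNum (strongPow (sigmaUnion G) (ℓ * (m * n))) : ℝ) ≤ Θ ^ (ℓ * (m * n)) :=
      alpha_le_capacity_pow _ _ hNpos
    have h4 : ((ℓ:ℝ)) ^ (ℓ * (m * n)) ≤ ((ℓ * (m * n) + 1 : ℕ) : ℝ) ^ ℓ *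
        ((Nat.multinomial Finset.univ (fun _ : Fin ℓ => m * n) : ℕ) : ℝ) := by
      rw [← Nat.cast_pow, ← Nat.cast_pow, ← Nat.cast_mul]
      exact_mod_cast pow_le_multinomial_mul ℓ (m * n)
    set M : ℝ := ((Nat.multinomial Finset.univ (fun _ : Fin ℓ => m * n) : ℕ) : ℝ) with hM
    have hM0 : 0 ≤ M := Nat.cast_nonneg _
    set B : ℝ := ((ℓ * (m * n) + 1 : ℕ) : ℝ) ^ ℓ with hB
    have hB0 : 0 < B := by
      rw [hB]; positivity
    -- combine : ℓ^K * a^n ≤ B * Θ^K  where K = ℓ*(m*n)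
    have hcomb : ((ℓ:ℝ)) ^ (ℓ * (m * n)) * a ^ n ≤ B * Θ ^ (ℓ * (m * n)) := by
      calc ((ℓ:ℝ)) ^ (ℓ * (m * n)) * a ^ n ≤ (B * M) * a ^ n := by
            apply mul_le_mul_of_nonneg_right h4 (pow_nonneg ha0 n)
        _ = B * (M * a ^ n) := by ring
        _ ≤ B * (M * (indepNum (strongPow (piStrongProd G) (m * n)) : ℝ)) := by
            apply mul_le_mul_of_nonneg_left (mul_le_mul_of_nonneg_left h1 hM0) hB0.le
        _ ≤ B * (indepNum (strongPow (sigmaUnion G) (ℓ * (m * n))) : ℝ) :=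
            mul_le_mul_of_nonneg_left h2 hB0.le
        _ ≤ B * Θ ^ (ℓ * (m * n)) := mul_le_mul_of_nonneg_left h3 hB0.le
    -- divide : a^n ≤ B * c^n
    have hpow : a ^ n ≤ B * c ^ n := by
      have hℓpow : (0:ℝ) < ((ℓ:ℝ)) ^ (ℓ * (m * n)) := by positivity
      have hcn : c ^ n = Θ ^ (ℓ * (m * n)) / ((ℓ:ℝ)) ^ (ℓ * (m * n)) := by
        calc c ^ n = ((Θ / (ℓ:ℝ)) ^ (ℓ * m)) ^ n := by rw [hc, pow_mul]
          _ = (Θ / (ℓ:ℝ)) ^ (ℓ * m * n) := by rw [← pow_mul]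
          _ = (Θ / (ℓ:ℝ)) ^ (ℓ * (m * n)) := by rw [mul_assoc]
          _ = Θ ^ (ℓ * (m * n)) / ((ℓ:ℝ)) ^ (ℓ * (m * n)) := div_pow Θ _ _
      rw [hcn, mul_div_assoc', le_div_iff₀ hℓpow]
      calc a ^ n * ((ℓ:ℝ)) ^ (ℓ * (m * n)) = ((ℓ:ℝ)) ^ (ℓ * (m * n)) * a ^ n := by ring
        _ ≤ B * Θ ^ (ℓ * (m * n)) := hcomb
    -- n-th root
    have hn0 : ((n:ℝ)) ≠ 0 := by positivity
    have key : a ≤ (B * c ^ n) ^ ((1:ℝ)/n) := by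
      have : a = (a ^ n) ^ ((1:ℝ)/n) := by
        rw [← Real.rpow_natCast a n, ← Real.rpow_mul ha0]
        rw [show (n:ℝ) * ((1:ℝ)/n) = 1 by field_simp]
        exact (Real.rpow_one _).symm
      rw [this]
      exact Real.rpow_le_rpow (pow_nonneg ha0 n) hpow (by positivity)
    calc a ≤ (B * c ^ n) ^ ((1:ℝ)/n) := key
      _ = B ^ ((1:ℝ)/n) * (c ^ n) ^ ((1:ℝ)/n) :=
          Real.mul_rpow hB0.le (pow_nonneg hc0 n)
      _ = B ^ ((1:ℝ)/n) * c := by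
          rw [← Real.rpow_natCast c n, ← Real.rpow_mul hc0]
          rw [show (n:ℝ) * ((1:ℝ)/n) = 1 by field_simp]
          rw [Real.rpow_one]
  -- limit argument
  have htend : Tendsto (fun n : ℕ =>
      (((ℓ * (m * n) + 1 : ℕ) : ℝ) ^ ℓ) ^ ((1:ℝ)/n) * c) atTop (𝓝 c) := by
    have hC : (0:ℝ) < (ℓ * m : ℕ) := by positivity
    set C : ℝ := ((ℓ * m : ℕ) : ℝ) with hCdef
    have hf : Tendsto (fun x : ℝ => x ^ ((ℓ * C) / (1 * x + (-1)))) atTop (𝓝 1) :=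
      tendsto_rpow_div_mul_add (ℓ * C) 1 (-1) zero_ne_one
    have hu : Tendsto (fun n : ℕ => C * n + 1) atTop atTop := by
      apply tendsto_atTop_add_const_right
      exact (tendsto_natCast_atTop_atTop (R := ℝ)).const_mul_atTop hC
    have hcomp := hf.comp hu
    have hequal : ∀ᶠ n : ℕ in atTop, (fun x : ℝ => x ^ ((ℓ * C) / (1 * x + (-1))))
        ((fun n : ℕ => C * n + 1) n)
        = (((ℓ * (m * n) + 1 : ℕ) : ℝ) ^ ℓ) ^ ((1:ℝ)/n) := by
      filter_upwards [eventually_ge_atTop 1] with n hn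
      have hn0 : ((n:ℝ)) ≠ 0 := by
        have : (1:ℝ) ≤ (n:ℝ) := by exact_mod_cast hn
        linarith
      have hx : (C * n + 1 : ℝ) = ((ℓ * (m * n) + 1 : ℕ) : ℝ) := by
        push_cast [hCdef]
        ring
      have hbase0 : (0:ℝ) ≤ C * n + 1 := by positivity
      rw [hx.symm]
      have hexp : (ℓ * C) / (1 * (C * n + 1) + (-1)) = (ℓ : ℝ) * ((1:ℝ)/n) := by
        have hC0 : C ≠ 0 := hC.ne'
        field_simp
        ring
      rw [hexp]
      rw [Real.rpow_mul hbase0, Real.rpow_natCast]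
    have := (hcomp.congr' hequal).mul_const c
    simpa using this
  have hfinal : a ≤ c := ge_of_tendsto htend (Filter.eventually_atTop.mpr ⟨1, hbound⟩)
  have hX0 : 0 ≤ (Θ / (ℓ:ℝ)) ^ ℓ := pow_nonneg hdiv0 _
  calc a ^ ((1:ℝ)/((k:ℝ)+1)) = a ^ ((1:ℝ)/((m:ℕ):ℝ)) := by
        rw [show (((m:ℕ)):ℝ) = (k:ℝ)+1 by rw [hm]; push_cast; ring]
    _ ≤ c ^ ((1:ℝ)/((m:ℕ):ℝ)) := Real.rpow_le_rpow ha0 hfinal (by positivity)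
    _ = (Θ / (ℓ:ℝ)) ^ ℓ := by
        rw [hc, ← Real.rpow_natCast ((Θ / (ℓ:ℝ)) ^ ℓ) m, ← Real.rpow_mul hX0,
          show ((m:ℕ):ℝ) * ((1:ℝ)/((m:ℕ):ℝ)) = 1 by
            have : ((m:ℕ):ℝ) ≠ 0 := by positivity
            field_simp,
          Real.rpow_one]

end Paper
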